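/- Let K be a (possibly non-unital) ring with trivial left annihilator, meaning that for every non-zero x ∈ K there exists y ∈ K with x * y ≠ 0. Let S be the ring of n × n matrices over K, graded by ℤ via the diagonals: S_t is the additive subgroup of matrices M with M i j = 0 unless (j : ℤ) − (i : ℤ) = t. Then for every v ∈ ℤ and every non-zero x ∈ S_v there exists y ∈ S_{−v} with x * y ≠ 0. -/

import Mathlib

/-- Let `K` be a (possibly non-unital) ring with trivial left annihilator, and let `S` be
the ring of `n × n` matrices over `K`, `ℤ`-graded by the diagonals: the component of
degree `t` consists of the matrices `M` with `M i j = 0` unless `(j : ℤ) - i = t`.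
Then for every `v : ℤ` and every non-zero matrix `x` supported on the `v`-th diagonal
there is a matrix `y` supported on the `(-v)`-th diagonal with `x * y ≠ 0`. -/
theorem matrix_diagonal_grading_nonannihilation
    {K : Type*} [NonUnitalRing K]
    (hK : ∀ x : K, x ≠ 0 → ∃ y : K, x * y ≠ 0) {n : ℕ}
    (v : ℤ) (x : Matrix (Fin n) (Fin n) K)
    (hx : ∀ i j : Fin n, (j : ℤ) - (i : ℤ) ≠ v → x i j = 0) (hx0 : x ≠ 0) :
    ∃ y : Matrix (Fin n) (Fin n) K,
      (∀ i j : Fin n, (j : ℤ) - (i : ℤ) ≠ -v → y i j = 0) ∧ x * y ≠ 0 := by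
  obtain ⟨i0, j0, hij⟩ : ∃ i j, x i j ≠ 0 := by
    by_contra h
    push_neg at h
    exact hx0 (by ext i j; simp [h i j])
  have hv : (j0 : ℤ) - (i0 : ℤ) = v := by
    by_contra h; exact hij (hx i0 j0 h)
  obtain ⟨y0, hy0⟩ := hK _ hij
  refine ⟨fun i j => if i = j0 ∧ j = i0 then y0 else 0, ?_, ?_⟩
  · intro i j h
    simp only [ite_eq_right_iff]
    rintro ⟨rfl, rfl⟩
    omega
  · intro h
    apply hy0
    have := congrFun (congrFun h i0) i0
    change (∑ k, x i0 k * (if k = j0 ∧ i0 = i0 then y0 else 0)) = 0 at this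
    simpa [Matrix.mul_apply, Finset.sum_ite_eq' (Finset.univ : Finset (Fin n)) j0]
      using this
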